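/- Let 𝒟 be a measurable relation on ℝ^N × ℝ^N such that for every pair at least one of 𝒟(u', u'') or 𝒟(u'', u') holds. Let u, u⁽¹⁾, …, u⁽ⱽ⁾ be i.i.d. draws from a distribution 𝒰 on ℝ^N. Then the probability that 𝒟(u⁽ᵛ⁾, u) fails for all v ∈ [V] is at most 2/(V+1). -/

import Mathlib

open MeasureTheory ProbabilityTheory Set

/-- Let `D` be a measurable duel relation on `ℝ^N × ℝ^N` such that
for every pair at least one of `D u' u''` or `D u'' u'` holds, and let
`X 0, X 1, …, X V` be i.i.d. draws from a distribution on `ℝ^N` (with `X 0`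
playing the role of `u` and `X v.succ` the role of `u⁽ᵛ⁾`). Then the
probability that `D (u⁽ᵛ⁾) u` fails for every `v ∈ [V]` is at most
`2/(V+1)`. -/
theorem all_duels_fail_prob_bound (N V : ℕ)
    {Ω : Type*} [MeasurableSpace Ω] (μ : Measure Ω) [IsProbabilityMeasure μ]
    (D : (Fin N → ℝ) → (Fin N → ℝ) → Prop)
    (hmeas : MeasurableSet {p : (Fin N → ℝ) × (Fin N → ℝ) | D p.1 p.2})
    (htotal : ∀ u' u'', D u' u'' ∨ D u'' u')
    (X : Fin (V + 1) → Ω → Fin N → ℝ)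
    (hindep : iIndepFun X μ)
    (hident : ∀ a b, IdentDistrib (X a) (X b) μ μ) :
    μ {ω | ∀ v : Fin V, ¬ D (X v.succ ω) (X 0 ω)} ≤ ENNReal.ofReal (2 / (V + 1)) := by
  classical
  have hXae : ∀ j, AEMeasurable (X j) μ := fun j => (hident j 0).aemeasurable_fst
  set ν : Measure (Fin N → ℝ) := μ.map (X 0) with hν
  haveI : IsProbabilityMeasure ν := Measure.isProbabilityMeasure_map (hXae 0)
  have hmapν : ∀ j, μ.map (X j) = ν := fun j => (hident j 0).map_eq
  set Y : Ω → (Fin (V + 1) → Fin N → ℝ) := fun ω j => X j ω with hY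
  have hYae : AEMeasurable Y μ := by
    choose g hg hge using fun j => hXae j
    refine ⟨fun ω j => g j ω, measurable_pi_lambda _ hg, ?_⟩
    filter_upwards [ae_all_iff.mpr hge] with ω h
    funext j
    exact h j
  -- the law of the vector Y is the product measure
  have hlaw : μ.map Y = Measure.pi (fun _ : Fin (V + 1) => ν) := by
    refine (Measure.pi_eq fun s hs => ?_).symm
    rw [Measure.map_apply_of_aemeasurable hYae (MeasurableSet.univ_pi hs)]
    have hpre : Y ⁻¹' Set.pi Set.univ s = ⋂ j ∈ Finset.univ, X j ⁻¹' s j := by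
      ext ω; simp [hY, Set.mem_pi]
    rw [hpre, hindep.measure_inter_preimage_eq_mul Finset.univ (fun i _ => hs i)]
    exact Finset.prod_congr rfl fun j _ => by
      rw [← hmapν j, Measure.map_apply_of_aemeasurable (hXae j) (hs j)]
  -- the "i beats everyone" events
  set B : Fin (V + 1) → Set (Fin (V + 1) → Fin N → ℝ) :=
    fun i => {g | ∀ j, j ≠ i → ¬ D (g j) (g i)} with hB
  have hBmeas : ∀ i, MeasurableSet (B i) := by
    intro i
    have hBi : B i = ⋂ j, ⋂ (_ : j ≠ i), ((fun g : Fin (V + 1) → Fin N → ℝ =>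
        ((g j, g i) : (Fin N → ℝ) × (Fin N → ℝ))) ⁻¹' {p | D p.1 p.2})ᶜ := by
      ext g; simp [hB]
    rw [hBi]
    exact MeasurableSet.iInter fun j => MeasurableSet.iInter fun _ =>
      (((measurable_pi_apply j).prodMk (measurable_pi_apply i)) hmeas).compl
  have hdisj : Pairwise (Function.onFun Disjoint B) := by
    intro i j hij
    rw [Function.onFun, Set.disjoint_left]
    intro g hgi hgj
    exact (htotal (g i) (g j)).elim (hgj i hij) (hgi j hij.symm)
  -- by symmetry, all B i have the same measure
  have hBeq : ∀ i, Measure.pi (fun _ : Fin (V + 1) => ν) (B i)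
      = Measure.pi (fun _ : Fin (V + 1) => ν) (B 0) := by
    intro i
    set e : Fin (V + 1) ≃ Fin (V + 1) := Equiv.swap 0 i with he
    have hmp := MeasureTheory.measurePreserving_piCongrLeft
      (fun _ : Fin (V + 1) => ν) e
    set T := MeasurableEquiv.piCongrLeft (fun _ : Fin (V + 1) => Fin N → ℝ) e with hT
    have h1 : Measure.pi (fun _ : Fin (V + 1) => ν) (T ⁻¹' B i)
        = Measure.pi (fun _ : Fin (V + 1) => ν) (B i) :=
      hmp.measure_preimage (hBmeas i).nullMeasurableSet
    have h2 : T ⁻¹' B i = B 0 := by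
      ext f
      simp only [Set.mem_preimage, hB, Set.mem_setOf_eq]
      constructor
      · intro h k hk
        have hek : e k ≠ i := by
          intro hc
          apply hk
          have := congrArg e hc
          rwa [Equiv.swap_apply_self, Equiv.swap_apply_right] at this
        have := h (e k) hek
        rwa [MeasurableEquiv.piCongrLeft_apply_apply,
          show i = e 0 from (Equiv.swap_apply_left 0 i).symm,
          MeasurableEquiv.piCongrLeft_apply_apply] at this
      · intro h j hj
        have hej : e j ≠ 0 := by
          intro hc
          apply hj
          have := congrArg e hc
          rwa [Equiv.swap_apply_self, Equiv.swap_apply_left] at this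
        have := h (e j) hej
        rw [show j = e (e j) from (Equiv.swap_apply_self 0 i j).symm,
          MeasurableEquiv.piCongrLeft_apply_apply,
          show i = e 0 from (Equiv.swap_apply_left 0 i).symm,
          MeasurableEquiv.piCongrLeft_apply_apply]
        exact this
    rw [← h1, h2]
  -- the target set is Y ⁻¹' B 0
  have htarget : {ω | ∀ v : Fin V, ¬ D (X v.succ ω) (X 0 ω)} = Y ⁻¹' B 0 := by
    ext ω
    simp only [Set.mem_setOf_eq, Set.mem_preimage, hB, hY]
    constructor
    · intro h j hj
      have : j = (j.pred hj).succ := (Fin.succ_pred j hj).symm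
      rw [this]; exact h _
    · intro h v
      exact h v.succ (Fin.succ_ne_zero v)
  have hμtarget : μ {ω | ∀ v : Fin V, ¬ D (X v.succ ω) (X 0 ω)}
      = Measure.pi (fun _ : Fin (V + 1) => ν) (B 0) := by
    rw [htarget, ← hlaw, Measure.map_apply_of_aemeasurable hYae (hBmeas 0)]
  -- the disjoint union bound
  set p := Measure.pi (fun _ : Fin (V + 1) => ν) (B 0) with hp
  have hsum : (V + 1 : ENNReal) * p ≤ 1 := by
    have h1 : ∑ i : Fin (V + 1), Measure.pi (fun _ : Fin (V + 1) => ν) (B i)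
        = Measure.pi (fun _ : Fin (V + 1) => ν) (⋃ i, B i) := by
      rw [measure_iUnion hdisj hBmeas, tsum_fintype]
    have h2 : ∑ i : Fin (V + 1), Measure.pi (fun _ : Fin (V + 1) => ν) (B i)
        = (V + 1 : ENNReal) * p := by
      rw [Finset.sum_congr rfl fun i _ => hBeq i, Finset.sum_const, Finset.card_univ,
        Fintype.card_fin, nsmul_eq_mul]
      push_cast
      ring
    calc (V + 1 : ENNReal) * p = _ := h2.symm
      _ = _ := h1
      _ ≤ 1 := prob_le_one
  have hple : p ≤ (V + 1 : ENNReal)⁻¹ := by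
    rw [ENNReal.le_inv_iff_mul_le, mul_comm]
    exact hsum
  rw [hμtarget]
  refine hple.trans ?_
  have h2 : ENNReal.ofReal (2 / (V + 1)) = 2 / (V + 1 : ENNReal) := by
    rw [ENNReal.ofReal_div_of_pos (by positivity)]
    congr 1
    · norm_num
    · rw [ENNReal.ofReal_add (by positivity) (by norm_num), ENNReal.ofReal_natCast,
        ENNReal.ofReal_one]
  rw [h2, ← one_div]
  exact ENNReal.div_le_div_right one_le_two _
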